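/- Characterization of the f-ESS value for communication games (Theorem 4.1): Suppose f ∈ F_G satisfies (FA). Then a solution φ ∈ F_G satisfies (E), (FA), and (f-FDS) if and only if for every communication game (v,g) and every i ∈ N, φ_i(v,g) = f_i(v,g) + (1/n)·(v(N) − Σ_{k∈N} f_k(v,g)). -/

import Mathlib

/-!
Theorem 4.1: characterization of the f-ESS value for communication games.
-/

namespace Stmt3

/-- A TU-game on the player set `N`: a function on coalitions vanishing at `∅`. -/
abbrev Game (N : Type*) := {v : Finset N → ℝ // v ∅ = 0}

/-- A solution for communication games. -/
abbrev GSolution (N : Type*) := Game N → SimpleGraph N → N → ℝ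

variable {N : Type*} [Fintype N] [DecidableEq N]

/-- The component of `N/g` containing the player `i`. -/
noncomputable def comp (g : SimpleGraph N) (i : N) : Finset N :=
  (Set.toFinite {j | g.Reachable i j}).toFinset

/-- Efficiency (E). -/
def Efficient (φ : GSolution N) : Prop :=
  ∀ (v : Game N) (g : SimpleGraph N), ∑ i, φ v g i = v.1 Finset.univ

/-- Fairness (FA): severing a link `ij` changes the payoffs of `i` and `j`
by the same amount. -/
def FA (φ : GSolution N) : Prop :=
  ∀ (v : Game N) (g : SimpleGraph N) (i j : N), g.Adj i j →
    φ v g i - φ v (g.deleteEdges {s(i, j)}) i =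
      φ v g j - φ v (g.deleteEdges {s(i, j)}) j

/-- `f`-fair distribution of the surplus (`f`-FDS). -/
def FDS (f φ : GSolution N) : Prop :=
  ∀ (v : Game N) (g : SimpleGraph N) (i j : N),
    (1 / ((comp g i).card : ℝ)) * ∑ k ∈ comp g i, (φ v g k - f v g k) =
      (1 / ((comp g j).card : ℝ)) * ∑ k ∈ comp g j, (φ v g k - f v g k)

lemma mem_comp_iff (g : SimpleGraph N) (i j : N) :
    j ∈ comp g i ↔ g.Reachable i j := by
  simp [comp, Set.Finite.mem_toFinset]

lemma self_mem_comp (g : SimpleGraph N) (i : N) : i ∈ comp g i :=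
  (mem_comp_iff g i i).mpr (SimpleGraph.Reachable.refl i)

lemma comp_card_ne_zero (g : SimpleGraph N) (i : N) :
    ((comp g i).card : ℝ) ≠ 0 := by
  exact_mod_cast Finset.card_ne_zero_of_mem (self_mem_comp g i)

/-- Key lemma: if `f` and `φ` satisfy (FA) and `φ` satisfies (`f`-FDS), then
`φ - f` is a constant (over players) for each communication game. -/
lemma psi_const (f φ : GSolution N) (hf : FA f) (hφ : FA φ) (hFDS : FDS f φ)
    (v : Game N) :
    ∀ (m : ℕ) (g : SimpleGraph N), (Set.toFinite g.edgeSet).toFinset.card ≤ m →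
      ∀ i j : N, φ v g i - f v g i = φ v g j - f v g j := by
  intro m
  induction m with
  | zero =>
    intro g hg i j
    have hempty : g.edgeSet = ∅ := by
      have h0 := Finset.card_eq_zero.mp (Nat.le_zero.mp hg)
      simpa [Set.Finite.toFinset_eq_empty] using h0
    have hgbot : g = ⊥ := SimpleGraph.edgeSet_eq_empty.mp hempty
    subst hgbot
    have hc : ∀ k : N, comp (⊥ : SimpleGraph N) k = {k} := by
      intro k; ext x
      simp [mem_comp_iff, SimpleGraph.reachable_bot, eq_comm]
    have h := hFDS v ⊥ i j
    rw [hc i, hc j] at h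
    simpa using h
  | succ m IH =>
    intro g hg
    have hadj : ∀ i j : N, g.Adj i j →
        φ v g i - f v g i = φ v g j - f v g j := by
      intro i j h
      set g' := g.deleteEdges {s(i, j)} with hg'def
      have hmemE : s(i, j) ∈ (Set.toFinite g.edgeSet).toFinset := by
        rw [Set.Finite.mem_toFinset]; exact h
      have hsub : (Set.toFinite g'.edgeSet).toFinset =
          ((Set.toFinite g.edgeSet).toFinset).erase s(i, j) := by
        ext x
        simp [Set.Finite.mem_toFinset, hg'def, SimpleGraph.edgeSet_deleteEdges,
          Finset.mem_erase, and_comm]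
      have hcard : (Set.toFinite g'.edgeSet).toFinset.card ≤ m := by
        rw [hsub, Finset.card_erase_of_mem hmemE]
        omega
      have h1 := hφ v g i j h
      have h2 := hf v g i j h
      have h3 := IH g' hcard i j
      rw [← hg'def] at h1 h2
      linarith
    have hreach : ∀ i j : N, g.Reachable i j →
        φ v g i - f v g i = φ v g j - f v g j := by
      intro i j h
      obtain ⟨w⟩ := h
      induction w with
      | nil => rfl
      | cons h' _ ih => exact (hadj _ _ h').trans ih
    intro i j
    have hsum : ∀ k : N, ∑ x ∈ comp g k, (φ v g x - f v g x) =
        ((comp g k).card : ℝ) * (φ v g k - f v g k) := by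
      intro k
      rw [Finset.sum_congr rfl (fun x hx => hreach x k
        (((mem_comp_iff g k x).mp hx).symm)), Finset.sum_const, nsmul_eq_mul]
    have h := hFDS v g i j
    rw [hsum i, hsum j, ← mul_assoc, ← mul_assoc,
      one_div_mul_cancel (comp_card_ne_zero g i),
      one_div_mul_cancel (comp_card_ne_zero g j), one_mul, one_mul] at h
    exact h

/-- Theorem 4.1: if `f` satisfies (FA), then `φ` satisfies (E), (FA) and
(`f`-FDS) iff `φ` is the `f`-ESS value for communication games. -/
theorem fESS_communication [Nonempty N] (f : GSolution N) (hf : FA f)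
    (φ : GSolution N) :
    (Efficient φ ∧ FA φ ∧ FDS f φ) ↔
      (∀ (v : Game N) (g : SimpleGraph N) (i : N),
        φ v g i = f v g i +
          (1 / (Fintype.card N : ℝ)) * (v.1 Finset.univ - ∑ k, f v g k)) := by
  have hn : ((Fintype.card N : ℝ)) ≠ 0 := by
    exact_mod_cast Fintype.card_ne_zero
  constructor
  · rintro ⟨hE, hφ, hFDS⟩ v g i
    have hconst := psi_const f φ hf hφ hFDS v
      (Set.toFinite g.edgeSet).toFinset.card g le_rfl
    have hsum : ∑ k, (φ v g k - f v g k) =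
        (Fintype.card N : ℝ) * (φ v g i - f v g i) := by
      rw [Finset.sum_congr rfl (fun x _ => hconst x i), Finset.sum_const,
        nsmul_eq_mul, Finset.card_univ]
    have hsum2 : ∑ k, (φ v g k - f v g k) = v.1 Finset.univ - ∑ k, f v g k := by
      rw [Finset.sum_sub_distrib, hE v g]
    rw [hsum] at hsum2
    have : φ v g i - f v g i =
        (1 / (Fintype.card N : ℝ)) * (v.1 Finset.univ - ∑ k, f v g k) := by
      field_simp
      linarith [hsum2]
    linarith
  · intro h
    refine ⟨?_, ?_, ?_⟩
    · intro v g
      have : ∑ i, φ v g i = ∑ i, (f v g i +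
          (1 / (Fintype.card N : ℝ)) * (v.1 Finset.univ - ∑ k, f v g k)) :=
        Finset.sum_congr rfl fun i _ => h v g i
      rw [this, Finset.sum_add_distrib, Finset.sum_const, nsmul_eq_mul,
        Finset.card_univ]
      field_simp
      ring
    · intro v g i j hadj
      rw [h v g i, h v (g.deleteEdges {s(i, j)}) i, h v g j,
        h v (g.deleteEdges {s(i, j)}) j]
      have := hf v g i j hadj
      ring_nf
      linarith
    · intro v g i j
      have hsum : ∀ k : N, ∑ x ∈ comp g k, (φ v g x - f v g x) =
          ((comp g k).card : ℝ) *
            ((1 / (Fintype.card N : ℝ)) * (v.1 Finset.univ - ∑ k, f v g k)) := by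
        intro k
        have hk : ∀ x ∈ comp g k, φ v g x - f v g x =
            (1 / (Fintype.card N : ℝ)) * (v.1 Finset.univ - ∑ k, f v g k) :=
          fun x _ => by rw [h v g x]; ring
        rw [Finset.sum_congr rfl hk, Finset.sum_const, nsmul_eq_mul]
      rw [hsum i, hsum j]
      field_simp
      rw [mul_div_cancel_left₀ _ (comp_card_ne_zero g i),
        mul_div_cancel_right₀ _ (comp_card_ne_zero g j)]

end Stmt3
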